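/- Let f : ℝ^d → ℝ be μ-PL and L₁-smooth with 2μ > L₁. If x⁺ = x − (1/L₁)∇f(x) (one gradient step at time t), the objective is L₂-Lipschitz in the gradient in t (‖∇ₓf(x;s) − ∇ₓf(x;t)‖ ≤ L₂|s−t|), and ‖∇ₓf(x⁺;t+h)‖ > r where r := (1 + √(2(L₁/μ − 1)))/(2 − L₁/μ) · L₂h, then the optimality gap strictly decreases: (f(x;t) − f*(t)) − (f(x⁺;t+h) − f*(t+h)) > L₂²h²/(2(2μ − L₁)). -/

import Mathlib

lemma descent_aux {d : ℕ} (φ : EuclideanSpace ℝ (Fin d) → ℝ)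
    (g : EuclideanSpace ℝ (Fin d) → EuclideanSpace ℝ (Fin d)) (L : ℝ) (hL : 0 < L)
    (hgrad : ∀ x, HasGradientAt φ (g x) x)
    (hlip : ∀ x y, ‖g x - g y‖ ≤ L * ‖x - y‖)
    (x y : EuclideanSpace ℝ (Fin d)) :
    φ y ≤ φ x + inner ℝ (g x) (y - x) + L / 2 * ‖y - x‖ ^ 2 := by
  set v := y - x with hv
  set c : ℝ := inner ℝ (g x) v with hc
  set n : ℝ := ‖v‖ ^ 2 with hn
  set ψ : ℝ → ℝ := fun s => φ (x + s • v) - s * c - L * s ^ 2 / 2 * n with hψ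
  have hderiv : ∀ s : ℝ, HasDerivAt ψ
      ((inner ℝ (g (x + s • v)) v : ℝ) - c - L * s * n) s := by
    intro s
    have hline : HasDerivAt (fun s : ℝ => x + s • v) v s := by
      simpa using ((hasDerivAt_id s).smul_const v).const_add x
    have h1 : HasDerivAt (fun s : ℝ => φ (x + s • v))
        ((inner ℝ (g (x + s • v)) v : ℝ)) s := by
      have := (hgrad (x + s • v)).hasFDerivAt.comp_hasDerivAt s hline
      exact this
    have h2 : HasDerivAt (fun s : ℝ => s * c) c s := by
      simpa using (hasDerivAt_id s).mul_const c
    have h3 : HasDerivAt (fun s : ℝ => L * s ^ 2 / 2 * n) (L * s * n) s := by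
      have hp : HasDerivAt (fun s : ℝ => s ^ 2) (2 * s) s := by
        simpa using hasDerivAt_pow 2 s
      have := ((hp.const_mul L).div_const 2).mul_const n
      exact this.congr_deriv (by ring)
    exact (h1.sub h2).sub h3
  have hmono : AntitoneOn ψ (Set.Icc (0:ℝ) 1) := by
    apply antitoneOn_of_deriv_nonpos (convex_Icc 0 1)
    · exact fun s _ => (hderiv s).continuousAt.continuousWithinAt
    · intro s _
      exact (hderiv s).differentiableAt.differentiableWithinAt
    · intro s hs
      rw [interior_Icc] at hs
      rw [(hderiv s).deriv]
      have hsub : (inner ℝ (g (x + s • v)) v : ℝ) - c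
          = inner ℝ (g (x + s • v) - g x) v := by
        rw [hc, inner_sub_left]
      have h1 : (inner ℝ (g (x + s • v) - g x) v : ℝ) ≤ ‖g (x + s • v) - g x‖ * ‖v‖ :=
        real_inner_le_norm _ _
      have h2 : ‖g (x + s • v) - g x‖ ≤ L * ‖(x + s • v) - x‖ := hlip _ _
      have h3 : ‖(x + s • v) - x‖ = s * ‖v‖ := by
        simp [norm_smul, abs_of_pos hs.1]
      rw [h3] at h2
      rw [hsub]
      have h5 : L * (s * ‖v‖) * ‖v‖ = L * s * n := by rw [hn]; ring
      have h4 := mul_le_mul_of_nonneg_right h2 (norm_nonneg v)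
      linarith
  have key : ψ 1 ≤ ψ 0 :=
    hmono (Set.mem_Icc.2 ⟨le_refl 0, zero_le_one⟩)
      (Set.mem_Icc.2 ⟨zero_le_one, le_refl 1⟩) zero_le_one
  have e1 : x + v = y := by rw [hv]; abel
  simp only [hψ, one_smul, zero_smul, add_zero, e1] at key
  norm_num at key
  linarith

lemma step_decrease {d : ℕ} (φ : EuclideanSpace ℝ (Fin d) → ℝ)
    (g : EuclideanSpace ℝ (Fin d) → EuclideanSpace ℝ (Fin d)) (L : ℝ) (hL : 0 < L)
    (hgrad : ∀ x, HasGradientAt φ (g x) x)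
    (hlip : ∀ x y, ‖g x - g y‖ ≤ L * ‖x - y‖)
    (p : EuclideanSpace ℝ (Fin d)) :
    φ (p - (1 / L) • g p) ≤ φ p - ‖g p‖ ^ 2 / (2 * L) := by
  have key := descent_aux φ g L hL hgrad hlip p (p - (1 / L) • g p)
  have e : (p - (1 / L) • g p) - p = -((1 / L) • g p) := by abel
  rw [e] at key
  have e2 : (inner ℝ (g p) (-((1 / L) • g p)) : ℝ) = -(1 / L) * ‖g p‖ ^ 2 := by
    rw [inner_neg_right, real_inner_smul_right, real_inner_self_eq_norm_sq]
    ring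
  have e3 : ‖-((1 / L) • g p)‖ ^ 2 = (1 / L) ^ 2 * ‖g p‖ ^ 2 := by
    rw [norm_neg, norm_smul, mul_pow, Real.norm_eq_abs, sq_abs]
  rw [e2, e3] at key
  have hL' : L ≠ 0 := ne_of_gt hL
  calc φ (p - (1 / L) • g p)
      ≤ φ p + -(1 / L) * ‖g p‖ ^ 2 + L / 2 * ((1 / L) ^ 2 * ‖g p‖ ^ 2) := key
    _ = φ p - ‖g p‖ ^ 2 / (2 * L) := by field_simp; ring

theorem stmt_18 {d : ℕ}
    (f : EuclideanSpace ℝ (Fin d) → ℝ → ℝ)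
    (g : EuclideanSpace ℝ (Fin d) → ℝ → EuclideanSpace ℝ (Fin d))
    (L₁ L₂ μ h : ℝ) (hμ : 0 < μ) (hμL : μ ≤ L₁) (hL : L₁ < 2 * μ)
    (hL₂ : 0 ≤ L₂) (hh : 0 < h)
    (hgrad : ∀ (t : ℝ) (x : EuclideanSpace ℝ (Fin d)),
      HasGradientAt (fun y => f y t) (g x t) x)
    (hlipg : ∀ (t : ℝ) (x y : EuclideanSpace ℝ (Fin d)),
      ‖g x t - g y t‖ ≤ L₁ * ‖x - y‖)
    (hliptg : ∀ (x : EuclideanSpace ℝ (Fin d)) (s t : ℝ),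
      ‖g x s - g x t‖ ≤ L₂ * |s - t|)
    (fstar : ℝ → ℝ)
    (hopt : ∀ (t : ℝ) (x : EuclideanSpace ℝ (Fin d)), fstar t ≤ f x t)
    (hattained : ∀ t : ℝ, ∃ x, f x t = fstar t)
    (hPL : ∀ (x : EuclideanSpace ℝ (Fin d)) (t : ℝ),
      μ * (f x t - fstar t) ≤ (1 / 2) * ‖g x t‖ ^ 2)
    (x : EuclideanSpace ℝ (Fin d)) (t : ℝ)
    (xplus : EuclideanSpace ℝ (Fin d))
    (hstep : xplus = x - (1 / L₁) • g x t)
    (hbig : (1 + Real.sqrt (2 * (L₁ / μ - 1))) / (2 - L₁ / μ) * (L₂ * h) <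
      ‖g xplus (t + h)‖) :
    L₂ ^ 2 * h ^ 2 / (2 * (2 * μ - L₁)) <
      (f x t - fstar t) - (f xplus (t + h) - fstar (t + h)) := by
  have hL₁ : 0 < L₁ := lt_of_lt_of_le hμ hμL
  set b : ℝ := L₂ * h with hb
  have hbnn : 0 ≤ b := mul_nonneg hL₂ hh.le
  set a : ℝ := ‖g xplus t‖ with ha
  set A : ℝ := ‖g xplus (t + h)‖ with hA
  set G : ℝ := f x t - fstar t with hG
  set Gp : ℝ := f xplus (t + h) - fstar (t + h) with hGp
  -- step 1: descent
  have step1 : f xplus t ≤ f x t - ‖g x t‖ ^ 2 / (2 * L₁) := by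
    rw [hstep]
    exact step_decrease (fun y => f y t) (fun z => g z t) L₁ hL₁ (hgrad t) (hlipg t) x
  -- step 2: gradient norm bound at xplus
  have step2 : a ^ 2 ≤ 2 * L₁ * (f xplus t - fstar t) := by
    have h1 := step_decrease (fun y => f y t) (fun z => g z t) L₁ hL₁ (hgrad t) (hlipg t) xplus
    have h2 := hopt t (xplus - (1 / L₁) • g xplus t)
    have h4 : fstar t ≤ f xplus t - a ^ 2 / (2 * L₁) := le_trans h2 h1
    have h3 : 0 < 2 * L₁ := by positivity
    have h5 : a ^ 2 / (2 * L₁) ≤ f xplus t - fstar t := by linarith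
    have := (div_le_iff₀ h3).1 h5
    linarith
  -- PL at (x, t)
  have hPLx : 2 * μ * G ≤ ‖g x t‖ ^ 2 := by
    have := hPL x t
    rw [hG]; linarith
  -- gap at xplus, time t
  have hG' : f xplus t - fstar t ≤ G - ‖g x t‖ ^ 2 / (2 * L₁) := by
    rw [hG]; linarith
  have hG'nn : 0 ≤ f xplus t - fstar t := by linarith [hopt t xplus]
  have key_a : a ^ 2 ≤ 2 * (L₁ - μ) * G := by
    have h3 : 0 < 2 * L₁ := by positivity
    have h6 := mul_le_mul_of_nonneg_left hG' h3.le
    have e : 2 * L₁ * (‖g x t‖ ^ 2 / (2 * L₁)) = ‖g x t‖ ^ 2 := by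
      field_simp
    nlinarith [hPLx, step2]
  -- time Lipschitz
  have hAab : A ≤ a + b := by
    have h1 := hliptg xplus (t + h) t
    have h2 : |t + h - t| = h := by rw [show t + h - t = h by ring, abs_of_pos hh]
    rw [h2] at h1
    calc A = ‖(g xplus (t + h) - g xplus t) + g xplus t‖ := by rw [hA]; congr 1; abel
      _ ≤ ‖g xplus (t + h) - g xplus t‖ + ‖g xplus t‖ := norm_add_le _ _
      _ ≤ b + a := by rw [hb]; exact add_le_add h1 (le_refl a)
      _ = a + b := by ring
  -- PL at xplus, t+h
  have hPLp : 2 * μ * Gp ≤ A ^ 2 := by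
    have := hPL xplus (t + h)
    rw [hGp]; linarith
  have hAnn : 0 ≤ A := norm_nonneg _
  have hann : 0 ≤ a := norm_nonneg _
  have hA2 : A ^ 2 ≤ (a + b) ^ 2 := by nlinarith
  rcases eq_or_lt_of_le hμL with hcase | hcase
  · -- μ = L₁ : contradiction with hbig
    exfalso
    have h0 : 2 * (L₁ - μ) * G = 0 := by rw [hcase]; ring
    have ha0 : a = 0 := by
      have h1 : a ^ 2 = 0 := le_antisymm (by linarith) (sq_nonneg a)
      exact pow_eq_zero_iff two_ne_zero |>.1 h1
    have hκ : L₁ / μ = 1 := by rw [← hcase]; exact div_self (ne_of_gt hμ)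
    have hr : (1 + Real.sqrt (2 * (L₁ / μ - 1))) / (2 - L₁ / μ) * b = b := by
      rw [hκ]
      norm_num
    rw [hr] at hbig
    rw [ha0] at hAab
    linarith
  · -- μ < L₁
    set q : ℝ := Real.sqrt (2 * (L₁ / μ - 1)) with hqdef
    have hargpos : 0 < 2 * (L₁ / μ - 1) := by
      have : 1 < L₁ / μ := (one_lt_div hμ).2 hcase
      linarith
    have hqpos : 0 < q := Real.sqrt_pos.2 hargpos
    have hq2 : q ^ 2 = 2 * (L₁ / μ - 1) := Real.sq_sqrt hargpos.le
    have hq2' : μ * q ^ 2 = 2 * (L₁ - μ) := by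
      rw [hq2]; field_simp
    have h2κ : 0 < 2 - L₁ / μ := by
      rw [sub_pos, div_lt_iff₀ hμ]; linarith
    have h2μL : 0 < 2 * μ - L₁ := by linarith
    -- clear denominators in hbig
    have hbig' : μ * (1 + q) * b < (2 * μ - L₁) * A := by
      rw [div_mul_eq_mul_div, div_lt_iff₀ h2κ] at hbig
      have h7 := mul_lt_mul_of_pos_left hbig hμ
      have e2 : μ * (A * (2 - L₁ / μ)) = (2 * μ - L₁) * A := by
        field_simp
      calc μ * (1 + q) * b = μ * ((1 + q) * b) := by ring
        _ < μ * (A * (2 - L₁ / μ)) := h7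
        _ = (2 * μ - L₁) * A := e2
    -- second factor positivity
    have hfac2 : 0 < (2 * μ - L₁) * (a + b) - μ * (1 - q) * b := by
      have h1 : (2 * μ - L₁) * A ≤ (2 * μ - L₁) * (a + b) :=
        mul_le_mul_of_nonneg_left hAab h2μL.le
      have h8 : μ * (1 - q) * b = μ * (1 + q) * b - 2 * (μ * q * b) := by ring
      have h9 : 0 ≤ μ * q * b := mul_nonneg (mul_nonneg hμ.le hqpos.le) hbnn
      linarith
    have hfac1 : 0 < (2 * μ - L₁) * (a + b) - μ * (1 + q) * b := by
      have h1 : (2 * μ - L₁) * A ≤ (2 * μ - L₁) * (a + b) :=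
        mul_le_mul_of_nonneg_left hAab h2μL.le
      linarith
    have hprod := mul_pos hfac1 hfac2
    -- final algebra
    have hgoal : L₂ ^ 2 * h ^ 2 = b ^ 2 := by rw [hb]; ring
    rw [hgoal, div_lt_iff₀ (by positivity : (0:ℝ) < 2 * (2 * μ - L₁))]
    have hLμ : 0 < L₁ - μ := by linarith
    have hAμ : 0 < μ * (2 * μ - L₁) := by positivity
    have hBμ : 0 < (L₁ - μ) * (2 * μ - L₁) := by positivity
    have t1 := mul_le_mul_of_nonneg_left key_a hAμ.le
    have t2 := mul_le_mul_of_nonneg_left (le_trans hPLp hA2) hBμ.le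
    have hE : ((2 * μ - L₁) * (a + b) - μ * (1 + q) * b) *
        ((2 * μ - L₁) * (a + b) - μ * (1 - q) * b) =
        μ * (2 * μ - L₁) * a ^ 2 - (L₁ - μ) * (2 * μ - L₁) * (a + b) ^ 2
          - μ * (L₁ - μ) * b ^ 2 := by
      linear_combination (-(b ^ 2 * μ)) * hq2'
    rw [hE] at hprod
    have hfinal : (μ * (L₁ - μ)) * b ^ 2 <
        (μ * (L₁ - μ)) * ((G - Gp) * (2 * (2 * μ - L₁))) := by
      linarith only [t1, t2, hprod]
    exact (mul_lt_mul_iff_right₀ (by positivity)).1 hfinal
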